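/- Let V, E, θ ∈ ℝ, let p, q be coprime positive integers with q ≥ 3, and set v(n) := V·(⌊(n+1)·p/q⌋ − ⌊n·p/q⌋) for 0 ≤ n ≤ q−1. Let H(θ) be the q×q complex matrix with diagonal entries H(θ)_{n,n} = v(n), off-diagonal entries H(θ)_{n,n+1} = H(θ)_{n+1,n} = 1 for 0 ≤ n ≤ q−2, corner entries H(θ)_{0,q−1} = e^{−iθ} and H(θ)_{q−1,0} = e^{iθ}, and all other entries 0. Let A_n := [[E − v(n), −1],[1, 0]] and let M := A_{q−1}·A_{q−2}⋯A_1·A_0 be the transfer matrix. Then det(E·I_q − H(θ)) = tr(M) − 2·cos(θ). -/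

import Mathlib

namespace Sturm9

variable {R : Type*} [CommRing R]

/-- shift of a sequence -/
def shf (a : ℕ → R) : ℕ → R := fun n => a (n + 1)

/-- continuant -/
def cont : (ℕ → R) → ℕ → R
  | _, 0 => 1
  | a, 1 => a 0
  | a, (k+2) => a 0 * cont (shf a) (k+1) - cont (shf (shf a)) k
termination_by a k => k

@[simp] lemma cont_zero (a : ℕ → R) : cont a 0 = 1 := by rw [cont]
@[simp] lemma cont_one (a : ℕ → R) : cont a 1 = a 0 := by rw [cont]
lemma cont_succ_succ (a : ℕ → R) (k : ℕ) :
    cont a (k+2) = a 0 * cont (shf a) (k+1) - cont (shf (shf a)) k := by rw [cont]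

/-- tridiagonal entry -/
def trid (a : ℕ → R) (i j : ℕ) : R :=
  if i = j then a i else if i = j + 1 ∨ j = i + 1 then -1 else 0

lemma trid_shift (a : ℕ → R) (i j : ℕ) :
    trid a (i+1) (j+1) = trid (shf a) i j := by
  unfold trid shf
  simp only [show (i+1 = j+1) ↔ (i = j) from by omega,
    show (i+1 = j+1+1) ↔ (i = j+1) from by omega,
    show (j+1 = i+1+1) ↔ (j = i+1) from by omega]

lemma trid_zero_of_ge (a : ℕ → R) (i j : ℕ) (h : i + 2 ≤ j) : trid a i j = 0 := by
  unfold trid; rw [if_neg (by omega), if_neg (by omega)]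

lemma trid_zero_of_ge' (a : ℕ → R) (i j : ℕ) (h : j + 2 ≤ i) : trid a i j = 0 := by
  unfold trid; rw [if_neg (by omega), if_neg (by omega)]

/-- tridiagonal matrix -/
def tmat (a : ℕ → R) (k : ℕ) : Matrix (Fin k) (Fin k) R :=
  Matrix.of fun i j => trid a (i : ℕ) (j : ℕ)

lemma tmat_apply (a : ℕ → R) (k : ℕ) (i j : Fin k) :
    tmat a k i j = trid a (i : ℕ) (j : ℕ) := rfl

theorem det_tmat : ∀ (k : ℕ) (a : ℕ → R), (tmat a k).det = cont a k := by
  intro k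
  induction k using Nat.strong_induction_on with
  | _ k ih =>
    match k with
    | 0 => intro a; simp [tmat]
    | 1 => intro a; simp [tmat, Matrix.det_fin_one, trid]
    | (k+2) =>
      intro a
      rw [show k + 2 = (k+1).succ from rfl, Matrix.det_succ_row_zero]
      rw [Fin.sum_univ_succ, Fin.sum_univ_succ]
      have hrest : ∀ j : Fin k, tmat a (k+2) 0 j.succ.succ = 0 := by
        intro j
        rw [tmat_apply]
        exact trid_zero_of_ge a _ _ (by simp)
      rw [Finset.sum_eq_zero (fun j _ => by rw [hrest]; ring)]
      -- minor at (0,0)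
      have h00 : (tmat a (k+2)).submatrix Fin.succ ((0 : Fin (k+2)).succAbove)
          = tmat (shf a) (k+1) := by
        ext i j
        simp only [Matrix.submatrix_apply, Fin.succAbove_zero, tmat_apply,
          Fin.val_succ]
        exact trid_shift a i j
      have h1 : (Fin.succ (0 : Fin (k+1)) : Fin (k+2)) = 1 := Fin.succ_zero_eq_one
      have hv1 : ((Fin.succ (0 : Fin (k+1)) : Fin (k+2)) : ℕ) = 1 := by
        rw [Fin.val_succ, Fin.val_zero]
      have hsA0 : (((Fin.succ (0:Fin (k+1))).succAbove (0:Fin (k+1))) : ℕ) = 0 := by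
        rw [h1]; simp [Fin.succAbove, Fin.lt_def]
      have hsAS : ∀ j : Fin k,
          (((Fin.succ (0:Fin (k+1))).succAbove j.succ) : ℕ) = (j:ℕ)+2 := by
        intro j; rw [h1]; simp [Fin.succAbove, Fin.lt_def]
      -- minor at (0,1)
      have hminor1 : ((tmat a (k+2)).submatrix Fin.succ
          ((Fin.succ (0 : Fin (k+1))).succAbove)).det
          = - cont (shf (shf a)) k := by
        rw [Matrix.det_succ_column_zero, Fin.sum_univ_succ]
        have hz : ∀ i : Fin k,
            (tmat a (k+2)).submatrix Fin.succ ((Fin.succ (0 : Fin (k+1))).succAbove)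
              i.succ 0 = 0 := by
          intro i
          simp only [Matrix.submatrix_apply, tmat_apply, hsA0, Fin.val_succ]
          exact trid_zero_of_ge' a _ _ (by omega)
        rw [Finset.sum_eq_zero (fun i _ => by rw [hz]; ring)]
        have hsub : ((tmat a (k+2)).submatrix Fin.succ
            ((Fin.succ (0 : Fin (k+1))).succAbove)).submatrix
            ((0 : Fin (k+1)).succAbove) Fin.succ = tmat (shf (shf a)) k := by
          ext i j
          simp only [Matrix.submatrix_apply, tmat_apply, Fin.succAbove_zero,
            Fin.val_succ, hsAS]
          rw [show (i:ℕ) + 1 + 1 = (i:ℕ) + 2 from rfl,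
            show (j:ℕ) + 2 = (j:ℕ) + 1 + 1 from rfl]
          rw [← trid_shift, ← trid_shift]
        rw [hsub, ih k (by omega)]
        have hN00 : (tmat a (k+2)).submatrix Fin.succ
            ((Fin.succ (0 : Fin (k+1))).succAbove) 0 0 = -1 := by
          simp only [Matrix.submatrix_apply, tmat_apply, hsA0, Fin.val_succ,
            Fin.val_zero]
          unfold trid
          rw [if_neg (by omega), if_pos (by omega)]
        rw [hN00]
        simp only [Fin.val_zero, pow_zero]
        ring
      have e00 : tmat a (k+2) 0 0 = a 0 := by
        rw [tmat_apply, Fin.val_zero]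
        unfold trid; rw [if_pos rfl]
      have e01 : tmat a (k+2) 0 (Fin.succ 0) = -1 := by
        rw [tmat_apply, Fin.val_zero, hv1]
        unfold trid; rw [if_neg (by omega), if_pos (by omega)]
      rw [h00, ih (k+1) (by omega), hminor1, e00, e01, cont_succ_succ]
      simp only [Fin.val_zero, pow_zero, hv1, pow_one]
      ring

/-- transfer matrix -/
def amat (a : ℕ → R) (n : ℕ) : Matrix (Fin 2) (Fin 2) R := !![a n, -1; 1, 0]

def prodA (a : ℕ → R) (k : ℕ) : Matrix (Fin 2) (Fin 2) R :=
  ((List.range k).reverse.map (amat a)).prod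

lemma amat_shf (a : ℕ → R) (n : ℕ) : amat a (n+1) = amat (shf a) n := rfl

lemma prodA_succ (a : ℕ → R) (k : ℕ) :
    prodA a (k+1) = prodA (shf a) k * amat a 0 := by
  unfold prodA
  rw [List.range_succ_eq_map, List.reverse_cons, List.map_append,
    List.prod_append, List.map_reverse, List.map_map]
  simp only [List.map_cons, List.map_nil, List.prod_cons, List.prod_nil, mul_one,
    List.map_reverse]
  congr 2

@[simp] lemma prodA_zero (a : ℕ → R) : prodA a 0 = 1 := rfl

lemma prodA_one (a : ℕ → R) : prodA a 1 = amat a 0 := by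
  rw [prodA_succ, prodA_zero, one_mul]

lemma prodA_entries : ∀ (k : ℕ) (a : ℕ → R), prodA a (k+2) =
    !![cont a (k+2), -(cont (shf a) (k+1)); cont a (k+1), -(cont (shf a) k)] := by
  intro k
  induction k with
  | zero =>
    intro a
    rw [prodA_succ, prodA_one]
    unfold amat
    rw [Matrix.mul_fin_two, cont_succ_succ]
    ext i j
    fin_cases i <;> fin_cases j <;> simp [shf] <;> ring
  | succ k ih =>
    intro a
    rw [prodA_succ, ih (shf a)]
    unfold amat
    rw [Matrix.mul_fin_two, cont_succ_succ a (k+1), cont_succ_succ a k]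
    ext i j
    fin_cases i <;> fin_cases j <;>
      simp only [Matrix.cons_val', Matrix.cons_val_zero, Matrix.cons_val_one,
        Matrix.head_cons, Matrix.head_fin_const, Matrix.empty_val',
        Matrix.cons_val_fin_one, Matrix.of_apply] <;> ring

lemma cont_map {S : Type*} [CommRing S] (f : R →+* S) :
    ∀ (k : ℕ) (a : ℕ → R), cont (fun n => f (a n)) k = f (cont a k) := by
  intro k
  induction k using Nat.strong_induction_on with
  | _ k ih =>
    match k with
    | 0 => intro a; simp
    | 1 => intro a; simp
    | (k+2) =>
      intro a
      rw [cont_succ_succ, cont_succ_succ, map_sub, map_mul]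
      rw [show shf (shf (fun n => f (a n))) = fun n => f (shf (shf a) n) from rfl,
        show shf (fun n => f (a n)) = fun n => f (shf a n) from rfl,
        ih (k+1) (by omega), ih k (by omega)]

section corners
variable (a : ℕ → R) (m : ℕ)

lemma det_d2 :
    ((tmat a (m+3)).updateRow 0 (Pi.single (Fin.last (m+2)) (1:R))).det = 1 := by
  rw [Matrix.det_succ_row_zero]
  rw [Fintype.sum_eq_single (Fin.last (m+2)) (fun j hj => by
    rw [Matrix.updateRow_self, Pi.single_eq_of_ne hj]; ring)]
  rw [Matrix.updateRow_self, Pi.single_eq_same, Fin.val_last, Fin.succAbove_last]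
  have hsub : ∀ i j : Fin (m+2),
      ((tmat a (m+3)).updateRow 0 (Pi.single (Fin.last (m+2)) (1:R))).submatrix
        Fin.succ Fin.castSucc i j = trid a ((i:ℕ)+1) (j:ℕ) := by
    intro i j
    rw [Matrix.submatrix_apply, Matrix.updateRow_ne (Fin.succ_ne_zero i)]
    rfl
  rw [Matrix.det_of_upperTriangular (by
    intro i j hij
    rw [hsub]
    have : (j:ℕ) < (i:ℕ) := hij
    unfold trid
    rw [if_neg (by omega), if_neg (by omega)])]
  have hdiag : ∀ i : Fin (m+2), trid a ((i:ℕ)+1) (i:ℕ) = (-1:R) := by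
    intro i
    unfold trid
    rw [if_neg (by omega), if_pos (by omega)]
  rw [Finset.prod_congr rfl (fun i _ => by rw [hsub, hdiag] : ∀ i ∈ Finset.univ,
    ((tmat a (m+3)).updateRow 0 (Pi.single (Fin.last (m+2)) (1:R))).submatrix
      Fin.succ Fin.castSucc i i = (-1:R))]
  rw [Finset.prod_const]
  simp only [Finset.card_univ, Fintype.card_fin, mul_one]
  rw [← pow_add]
  exact Even.neg_one_pow ⟨m+2, by ring⟩

lemma det_d3 :
    ((tmat a (m+3)).updateRow (Fin.last (m+2)) (Pi.single (0 : Fin (m+3)) (1:R))).det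
      = 1 := by
  rw [Matrix.det_succ_row _ (Fin.last (m+2))]
  rw [Fintype.sum_eq_single (0 : Fin (m+3)) (fun j hj => by
    rw [Matrix.updateRow_self, Pi.single_eq_of_ne hj]; ring)]
  rw [Matrix.updateRow_self, Pi.single_eq_same, Fin.val_last, Fin.val_zero,
    Fin.succAbove_last, Fin.succAbove_zero]
  have hsub : ∀ i j : Fin (m+2),
      ((tmat a (m+3)).updateRow (Fin.last (m+2))
        (Pi.single (0 : Fin (m+3)) (1:R))).submatrix Fin.castSucc Fin.succ i j
        = trid a (i:ℕ) ((j:ℕ)+1) := by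
    intro i j
    rw [Matrix.submatrix_apply,
      Matrix.updateRow_ne (Fin.ne_of_lt (Fin.castSucc_lt_last i))]
    rfl
  rw [Matrix.det_of_lowerTriangular _ (by
    intro i j hij
    rw [hsub]
    have : (i:ℕ) < (j:ℕ) := hij
    unfold trid
    rw [if_neg (by omega), if_neg (by omega)])]
  have hdiag : ∀ i : Fin (m+2), trid a (i:ℕ) ((i:ℕ)+1) = (-1:R) := by
    intro i
    unfold trid
    rw [if_neg (by omega), if_pos (by omega)]
  rw [Finset.prod_congr rfl (fun i _ => by rw [hsub, hdiag] : ∀ i ∈ Finset.univ,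
    ((tmat a (m+3)).updateRow (Fin.last (m+2))
      (Pi.single (0 : Fin (m+3)) (1:R))).submatrix Fin.castSucc Fin.succ i i
      = (-1:R))]
  rw [Finset.prod_const]
  simp only [Finset.card_univ, Fintype.card_fin, mul_one, add_zero]
  rw [← pow_add]
  exact Even.neg_one_pow ⟨m+2, by ring⟩

lemma det_d4 :
    (((tmat a (m+3)).updateRow (Fin.last (m+2)) (Pi.single (0 : Fin (m+3)) (1:R))).updateRow
        0 (Pi.single (Fin.last (m+2)) (1:R))).det = -(cont (shf a) (m+1)) := by
  rw [Matrix.det_succ_row_zero]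
  rw [Fintype.sum_eq_single (Fin.last (m+2)) (fun j hj => by
    rw [Matrix.updateRow_self, Pi.single_eq_of_ne hj]; ring)]
  rw [Matrix.updateRow_self, Pi.single_eq_same, Fin.val_last, Fin.succAbove_last]
  set N := ((((tmat a (m+3)).updateRow (Fin.last (m+2))
      (Pi.single (0 : Fin (m+3)) (1:R))).updateRow 0
      (Pi.single (Fin.last (m+2)) (1:R)))).submatrix Fin.succ Fin.castSucc with hNdef
  have hNlast : ∀ j : Fin (m+2), N (Fin.last (m+1)) j
      = (Pi.single (0 : Fin (m+3)) (1:R) : Fin (m+3) → R) (Fin.castSucc j) := by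
    intro j
    rw [hNdef, Matrix.submatrix_apply,
      Matrix.updateRow_ne (Fin.succ_ne_zero _), Fin.succ_last,
      Matrix.updateRow_self]
  have hNother : ∀ (i : Fin (m+1)) (j : Fin (m+2)),
      N (Fin.castSucc i) j = trid a ((i:ℕ)+1) (j:ℕ) := by
    intro i j
    rw [hNdef, Matrix.submatrix_apply,
      Matrix.updateRow_ne (Fin.succ_ne_zero _),
      Matrix.updateRow_ne (by
        intro h
        have h2 := congrArg Fin.val h
        rw [Fin.val_succ, Fin.coe_castSucc, Fin.val_last] at h2
        omega)]
    rfl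
  have hNdet : N.det = (-1)^(m+1) * cont (shf a) (m+1) := by
    rw [Matrix.det_succ_row N (Fin.last (m+1))]
    rw [Fintype.sum_eq_single (0 : Fin (m+2)) (fun j hj => by
      rw [hNlast, Pi.single_eq_of_ne (fun h => hj (Fin.castSucc_eq_zero_iff.mp h))]
      ring)]
    rw [hNlast]
    rw [show (Fin.castSucc (0 : Fin (m+2))) = (0 : Fin (m+3)) from rfl]
    rw [Pi.single_eq_same, Fin.val_last, Fin.val_zero, Fin.succAbove_last,
      Fin.succAbove_zero]
    have hsub2 : N.submatrix Fin.castSucc Fin.succ = tmat (shf a) (m+1) := by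
      ext i j
      rw [Matrix.submatrix_apply, hNother, tmat_apply, Fin.val_succ, ← trid_shift]
    rw [hsub2, det_tmat]
    ring
  rw [hNdet, mul_one, ← mul_assoc, ← pow_add]
  rw [show (-1:R)^(m+2+(m+1)) = -1 from Odd.neg_one_pow ⟨m+1, by ring⟩]
  ring

end corners

lemma updateRow_comm' {n : Type*} [DecidableEq n] [Fintype n]
    (M : Matrix n n R) {i i' : n} (h : i ≠ i') (b c : n → R) :
    (M.updateRow i b).updateRow i' c = (M.updateRow i' c).updateRow i b := by
  ext r j
  simp only [Matrix.updateRow_apply]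
  split_ifs with h1 h2
  · exact absurd (h2.symm.trans h1) h
  · rfl
  · rfl
  · rfl

end Sturm9

open Sturm9 in
set_option maxHeartbeats 1000000 in
theorem charpoly_eq_discriminant_sub_two_cos
    (V E θ : ℝ) (p q : ℕ) (hp : 0 < p) (hq : 3 ≤ q) (hpq : Nat.Coprime p q)
    (v : ℕ → ℝ)
    (hv : ∀ n : ℕ, v n =
      V * ((⌊((n : ℝ) + 1) * p / q⌋ : ℤ) - (⌊(n : ℝ) * p / q⌋ : ℤ)))
    (H : Matrix (Fin q) (Fin q) ℂ)
    (hH : ∀ i j : Fin q, H i j =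
      if (i : ℕ) = (j : ℕ) then (v i : ℂ)
      else if (j : ℕ) = (i : ℕ) + 1 then 1
      else if (i : ℕ) = (j : ℕ) + 1 then 1
      else if (i : ℕ) = 0 ∧ (j : ℕ) = q - 1 then Complex.exp (-((θ : ℂ) * Complex.I))
      else if (i : ℕ) = q - 1 ∧ (j : ℕ) = 0 then Complex.exp ((θ : ℂ) * Complex.I)
      else 0)
    (A : ℕ → Matrix (Fin 2) (Fin 2) ℝ)
    (hA : ∀ n : ℕ, A n = !![E - v n, -1; 1, 0])
    (M : Matrix (Fin 2) (Fin 2) ℝ)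
    (hM : M = ((List.range q).reverse.map A).prod) :
    Matrix.det ((E : ℂ) • (1 : Matrix (Fin q) (Fin q) ℂ) - H) =
      (M.trace : ℂ) - 2 * (Real.cos θ : ℂ) := by
  obtain ⟨m, rfl⟩ : ∃ m, q = m + 3 := ⟨q - 3, by omega⟩
  set aR : ℕ → ℝ := fun n => E - v n with haR
  set a : ℕ → ℂ := fun n => ((aR n : ℝ) : ℂ) with ha
  set x : ℂ := -Complex.exp (-((θ:ℂ) * Complex.I)) with hx
  set y : ℂ := -Complex.exp ((θ:ℂ) * Complex.I) with hy
  set T : Matrix (Fin (m+3)) (Fin (m+3)) ℂ := tmat a (m+3) with hT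
  set eL : Fin (m+3) → ℂ := (Pi.single (Fin.last (m+2)) (1:ℂ) : Fin (m+3) → ℂ)
    with heL
  set e0 : Fin (m+3) → ℂ := (Pi.single (0 : Fin (m+3)) (1:ℂ) : Fin (m+3) → ℂ)
    with he0
  -- Step 1: identify the matrix
  have hD : (E : ℂ) • (1 : Matrix (Fin (m+3)) (Fin (m+3)) ℂ) - H
      = (T.updateRow 0 (T 0 + x • eL)).updateRow (Fin.last (m+2))
          (T (Fin.last (m+2)) + y • e0) := by
    ext i j
    have hj := j.isLt
    rw [Matrix.sub_apply, Matrix.smul_apply, Matrix.one_apply, hH,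
      Matrix.updateRow_apply, Matrix.updateRow_apply]
    by_cases hil : i = Fin.last (m+2)
    · subst hil
      rw [if_pos rfl]
      simp only [hT, heL, he0, ha, haR, Pi.add_apply, Pi.smul_apply,
        Pi.single_apply, smul_eq_mul, tmat_apply, trid, Fin.ext_iff,
        Fin.val_last, Fin.val_zero, false_or, or_false, false_and, and_false,
        true_and, and_true, not_false_iff]
      split_ifs <;>
          (try simp only [false_or, or_false, false_and, and_false] at *) <;>
          first
        | (exfalso; assumption)
        | (exfalso; omega)
        | (push_cast; ring)
        | (exfalso; tauto)
    · rw [if_neg hil]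
      have hil' : (i : ℕ) ≠ m + 2 := fun h => hil (Fin.ext (by rw [h, Fin.val_last]))
      by_cases hi0 : i = 0
      · subst hi0
        rw [if_pos rfl]
        simp only [hT, heL, he0, ha, haR, Pi.add_apply, Pi.smul_apply,
          Pi.single_apply, smul_eq_mul, tmat_apply, trid, Fin.ext_iff,
          Fin.val_last, Fin.val_zero, false_or, or_false, false_and, and_false,
          true_and, and_true, not_false_iff]
        split_ifs <;>
            (try simp only [false_or, or_false, false_and, and_false] at *) <;>
            first
          | (exfalso; assumption)
          | (exfalso; omega)
          | (simp only [show ¬((0:ℕ) = m + 3 - 1) by omega, show ¬((j:ℕ) = 0 + 1) by omega, show ¬((j:ℕ) = m + 3 - 1) by omega, show ¬((j:ℕ) = m + 2) by omega, false_and, ↓reduceIte]; ring)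
          | (push_cast; ring)
          | (exfalso; tauto)
      · rw [if_neg hi0]
        have hi0' : (i : ℕ) ≠ 0 := fun h => hi0 (Fin.ext (by rw [h, Fin.val_zero]))
        simp only [hT, ha, haR, tmat_apply, trid, Fin.ext_iff, Fin.val_last,
          Fin.val_zero, smul_eq_mul, false_or, or_false, false_and, and_false,
          true_and, and_true, not_false_iff]
        split_ifs <;>
            (try simp only [false_or, or_false, false_and, and_false] at *) <;>
            first
          | (exfalso; assumption)
          | (exfalso; omega)
          | (push_cast; ring)
          | (exfalso; tauto)
  rw [hD]
  -- Step 2: expand the determinant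
  have hlast_ne : (Fin.last (m+2) : Fin (m+3)) ≠ 0 := by
    intro h
    have := congrArg Fin.val h
    rw [Fin.val_last, Fin.val_zero] at this
    omega
  set X : Matrix (Fin (m+3)) (Fin (m+3)) ℂ := T.updateRow 0 (T 0 + x • eL) with hX
  have hXlast : T (Fin.last (m+2)) = X (Fin.last (m+2)) :=
    (Matrix.updateRow_ne hlast_ne).symm
  rw [hXlast, Matrix.det_updateRow_add, Matrix.updateRow_eq_self,
    Matrix.det_updateRow_smul]
  have hdetX : X.det = T.det + x * ((T.updateRow 0 eL).det) := by
    rw [hX, Matrix.det_updateRow_add, Matrix.updateRow_eq_self,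
      Matrix.det_updateRow_smul]
  have hcross : (X.updateRow (Fin.last (m+2)) e0).det
      = (T.updateRow (Fin.last (m+2)) e0).det
        + x * (((T.updateRow (Fin.last (m+2)) e0).updateRow 0 eL).det) := by
    rw [hX, updateRow_comm' T (Ne.symm hlast_ne),
      Matrix.det_updateRow_add]
    have h0ne : (0 : Fin (m+3)) ≠ Fin.last (m+2) := Ne.symm hlast_ne
    rw [show (T.updateRow (Fin.last (m+2)) e0).updateRow 0 (T 0)
        = (T.updateRow (Fin.last (m+2)) e0).updateRow 0
            ((T.updateRow (Fin.last (m+2)) e0) 0) from by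
      rw [Matrix.updateRow_ne h0ne]]
    rw [Matrix.updateRow_eq_self, Matrix.det_updateRow_smul]
  rw [hdetX, hcross, hT, det_tmat, det_d2 a m, det_d3 a m, det_d4 a m]
  -- Step 3: the trace side
  have hAeq : A = amat aR := funext fun n => by rw [hA]; rfl
  have hMeq : M = prodA aR (m+3) := by rw [hM, hAeq]; rfl
  have htr : M.trace = cont aR (m+3) - cont (shf aR) (m+1) := by
    rw [hMeq, show m + 3 = (m+1) + 2 from rfl, prodA_entries (m+1) aR,
      Matrix.trace_fin_two_of]
    ring
  rw [htr]
  -- Step 4: arithmetic with exponentials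
  have hcast1 : cont a (m+3) = ((cont aR (m+3) : ℝ) : ℂ) :=
    cont_map Complex.ofRealHom (m+3) aR
  have hcast2 : cont (shf a) (m+1) = ((cont (shf aR) (m+1) : ℝ) : ℂ) :=
    cont_map Complex.ofRealHom (m+1) (shf aR)
  have hxy : y * x = 1 := by
    rw [hx, hy, neg_mul_neg, ← Complex.exp_add]
    simp
  have hsumxy : x + y = -(2 * (Real.cos θ : ℂ)) := by
    rw [hx, hy, Complex.ofReal_cos, Complex.two_cos, neg_mul]
    ring
  rw [hcast1, hcast2]
  push_cast
  rw [Complex.ofReal_cos] at hsumxy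
  linear_combination (-((cont (shf aR) (m+1) : ℝ) : ℂ)) * hxy + hsumxy
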